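/- For every irrational number α and every n ∈ ℕ, there exist two open sets U₀, U₁ ⊆ 𝕋 = ℝ/ℤ such that for each m ∈ {0,1} the sets U̅_m, T_α U̅_m, ..., T_α^{n−1} U̅_m are pairwise disjoint (where T_α is rotation by α), and ∪_{m=0}^{1} ∪_{j=0}^{n−1} T_α^j U_m = 𝕋. (I.e., the irrational rotation on the circle has topological Rokhlin dimension at most 1.) -/

import Mathlib

open Set

private lemma irr_dense_pair (α : ℝ) (hα : Irrational α) {lo hi : ℝ} (h : lo < hi) :
    ∃ q p : ℤ, q • α + p • (1:ℝ) ∈ Ioo lo hi := by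
  have hd : Dense ((AddSubgroup.closure ({α, 1} : Set ℝ) : AddSubgroup ℝ) : Set ℝ) := by
    rcases AddSubgroup.dense_or_cyclic (AddSubgroup.closure ({α, 1} : Set ℝ)) with hd | ⟨a, ha⟩
    · exact hd
    · exfalso
      have hαmem : α ∈ AddSubgroup.closure ({α, 1} : Set ℝ) :=
        AddSubgroup.subset_closure (by simp)
      have h1mem : (1:ℝ) ∈ AddSubgroup.closure ({α, 1} : Set ℝ) :=
        AddSubgroup.subset_closure (by simp)
      rw [ha, AddSubgroup.mem_closure_singleton] at hαmem h1mem
      obtain ⟨m, hm⟩ := hαmem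
      obtain ⟨k, hk⟩ := h1mem
      rw [zsmul_eq_mul] at hm hk
      have hk0 : (k:ℝ) ≠ 0 := by
        intro h0
        rw [h0, zero_mul] at hk
        exact one_ne_zero hk.symm
      have hαk : α * (k:ℝ) = (m:ℝ) := by
        calc α * (k:ℝ) = (m:ℝ) * ((k:ℝ) * a) := by rw [← hm]; ring
          _ = (m:ℝ) := by rw [hk, mul_one]
      refine hα ⟨(m : ℚ)/(k:ℚ), ?_⟩
      push_cast
      rw [div_eq_iff hk0]
      exact hαk.symm
  obtain ⟨x, hx, hxI⟩ := hd.exists_mem_open isOpen_Ioo (nonempty_Ioo.mpr h)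
  rw [SetLike.mem_coe, AddSubgroup.mem_closure_pair] at hx
  obtain ⟨q, p, rfl⟩ := hx
  exact ⟨q, p, hxI⟩

set_option maxHeartbeats 1000000 in
/-- the irrational rotation `T_α` on `𝕋 = ℝ/ℤ` has topological Rokhlin
dimension at most 1: for every `n` there are two open sets `U₀, U₁` such that for each
`m` the sets `U̅_m, T_α U̅_m, …, T_α^{n-1} U̅_m` are pairwise disjoint, and the translates
`T_α^j U_m` (`m ∈ {0,1}`, `0 ≤ j < n`) cover `𝕋`. -/
theorem stmt11 (α : ℝ) (hα : Irrational α) (n : ℕ) (hn : 0 < n) :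
    ∃ U : Fin 2 → Set (AddCircle (1:ℝ)),
      (∀ m, IsOpen (U m)) ∧
      (∀ m, ∀ i j : ℕ, i < n → j < n → i ≠ j →
        Disjoint ((fun x => x + (i : ℤ) • (↑α : AddCircle (1:ℝ))) '' closure (U m))
                 ((fun x => x + (j : ℤ) • (↑α : AddCircle (1:ℝ))) '' closure (U m))) ∧
      ∀ x : AddCircle (1:ℝ), ∃ m, ∃ j : ℕ, j < n ∧
        x ∈ (fun y => y + (j : ℤ) • (↑α : AddCircle (1:ℝ))) '' U m := by
  haveI : Fact ((0:ℝ) < 1) := ⟨zero_lt_one⟩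
  have hn0 : (0:ℝ) < (n:ℝ) := by exact_mod_cast hn
  obtain ⟨q, p, hβmem⟩ := irr_dense_pair α hα
    (lo := 4/(4*(n:ℝ)+1)) (hi := 1/(n:ℝ))
    (by rw [div_lt_div_iff₀ (by positivity) hn0]; nlinarith)
  obtain ⟨β, hβdef⟩ : ∃ b : ℝ, b = q • α + p • (1:ℝ) := ⟨_, rfl⟩
  rw [← hβdef] at hβmem
  obtain ⟨hβlo, hβhi⟩ := hβmem
  have hβ0 : 0 < β := lt_trans (by positivity) hβlo
  have h1 : (n:ℝ) * β < 1 := by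
    rw [lt_div_iff₀ hn0] at hβhi; linarith
  have h2 : 1 < (n:ℝ) * β + β/4 := by
    rw [div_lt_iff₀ (by positivity)] at hβlo; nlinarith
  -- the coercion ℝ → AddCircle 1 as a group hom
  set π : ℝ →+ AddCircle (1:ℝ) := QuotientAddGroup.mk' (AddSubgroup.zmultiples (1:ℝ)) with hπdef
  have coe_add : ∀ a b : ℝ, ((a + b : ℝ) : AddCircle (1:ℝ))
      = (a : AddCircle (1:ℝ)) + (b : AddCircle (1:ℝ)) := fun a b => map_add π a b
  have coe_sub : ∀ a b : ℝ, ((a - b : ℝ) : AddCircle (1:ℝ))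
      = (a : AddCircle (1:ℝ)) - (b : AddCircle (1:ℝ)) := fun a b => map_sub π a b
  have coe_zsmul : ∀ (k : ℤ) (r : ℝ), ((k • r : ℝ) : AddCircle (1:ℝ))
      = k • (r : AddCircle (1:ℝ)) := fun k r => map_zsmul π k r
  have hint : ∀ k : ℤ, ((k:ℝ) : AddCircle (1:ℝ)) = 0 := by
    intro k
    rw [QuotientAddGroup.eq_zero_iff]
    exact AddSubgroup.mem_zmultiples_iff.mpr ⟨k, by simp⟩
  have hqα : (q:ℤ) • ((α:ℝ) : AddCircle (1:ℝ)) = ((β:ℝ) : AddCircle (1:ℝ)) := by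
    rw [hβdef, coe_add, coe_zsmul, coe_zsmul]
    have h1c : ((1:ℝ) : AddCircle (1:ℝ)) = 0 := by simpa using hint 1
    rw [h1c, smul_zero, add_zero]
  have hcomm : ∀ (k : ℤ) (x : AddCircle (1:ℝ)), q • (k • x) = k • (q • x) :=
    fun k x => map_zsmul (zsmulAddGroupHom q) k x
  -- the two combs
  set V : Fin 2 → Set (AddCircle (1:ℝ)) := fun m =>
    (fun r : ℝ => (r : AddCircle (1:ℝ))) ''
      Ioo ((m.val : ℝ) * (β/2)) ((m.val : ℝ) * (β/2) + 3*β/4) with hVdef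
  refine ⟨fun m => (fun z : AddCircle (1:ℝ) => q • z) ⁻¹' V m, ?_, ?_, ?_⟩
  · -- openness
    intro m
    exact ((QuotientAddGroup.isOpenMap_coe) _ isOpen_Ioo).preimage (continuous_zsmul q)
  · -- disjointness
    intro m i j hi hj hij
    have hIccSub : ∀ k : ℕ, k < n →
        Icc ((m.val:ℝ)*(β/2) + k*β) ((m.val:ℝ)*(β/2) + k*β + 3*β/4)
          ⊆ Ico ((m.val:ℝ)*(β/2)) ((m.val:ℝ)*(β/2) + 1) := by
      intro k hk x hx
      simp only [Set.mem_Icc] at hx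
      simp only [Set.mem_Ico]
      have hk' : (k:ℝ) ≤ (n:ℝ) - 1 := by
        have : (k:ℝ) + 1 ≤ (n:ℝ) := by exact_mod_cast hk
        linarith
      have hkβ : (k:ℝ)*β ≤ ((n:ℝ) - 1)*β := mul_le_mul_of_nonneg_right hk' hβ0.le
      have h0 : 0 ≤ (k:ℝ)*β := by positivity
      constructor
      · nlinarith [hx.1, hx.2]
      · nlinarith [hx.1, hx.2]
    have hkey : ∀ a b : ℕ, a < n → b < n → a ≠ b →
        Disjoint ((fun r : ℝ => (r : AddCircle (1:ℝ))) ''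
            Icc ((m.val:ℝ)*(β/2) + a*β) ((m.val:ℝ)*(β/2) + a*β + 3*β/4))
          ((fun r : ℝ => (r : AddCircle (1:ℝ))) ''
            Icc ((m.val:ℝ)*(β/2) + b*β) ((m.val:ℝ)*(β/2) + b*β + 3*β/4)) := by
      intro a b ha hb hab
      rw [Set.disjoint_left]
      rintro z ⟨x, hx, rfl⟩ ⟨y, hy, hyz⟩
      have hxy : y = x :=
        (AddCircle.coe_eq_coe_iff_of_mem_Ico (hIccSub b hb hy) (hIccSub a ha hx)).mp hyz
      subst hxy
      rcases hab.lt_or_gt with hl | hl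
      · have hba : (a:ℝ) + 1 ≤ (b:ℝ) := by exact_mod_cast hl
        have : ((a:ℝ)+1)*β ≤ (b:ℝ)*β := mul_le_mul_of_nonneg_right hba hβ0.le
        have h3 := hx.2
        have h4 := hy.1
        nlinarith
      · have hba : (b:ℝ) + 1 ≤ (a:ℝ) := by exact_mod_cast hl
        have : ((b:ℝ)+1)*β ≤ (a:ℝ)*β := mul_le_mul_of_nonneg_right hba hβ0.le
        have h3 := hy.2
        have h4 := hx.1
        nlinarith
    have himg : ∀ k : ℕ, k < n →
        (fun x => x + (k:ℤ) • ((α:ℝ) : AddCircle (1:ℝ))) ''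
            closure ((fun z : AddCircle (1:ℝ) => q • z) ⁻¹' V m) ⊆
          (fun z : AddCircle (1:ℝ) => q • z) ⁻¹'
            ((fun r : ℝ => (r : AddCircle (1:ℝ))) ''
              Icc ((m.val:ℝ)*(β/2) + k*β) ((m.val:ℝ)*(β/2) + k*β + 3*β/4)) := by
      intro k hk
      have hcl : closure ((fun z : AddCircle (1:ℝ) => q • z) ⁻¹' V m) ⊆
          (fun z : AddCircle (1:ℝ) => q • z) ⁻¹'
            ((fun r : ℝ => (r : AddCircle (1:ℝ))) ''
              Icc ((m.val:ℝ)*(β/2)) ((m.val:ℝ)*(β/2) + 3*β/4)) := by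
        apply closure_minimal
        · exact preimage_mono (image_mono Ioo_subset_Icc_self)
        · exact ((isCompact_Icc.image (QuotientAddGroup.continuous_mk)).isClosed).preimage
            (continuous_zsmul q)
      rintro x ⟨y, hy, rfl⟩
      obtain ⟨r, hr, hre⟩ := hcl hy
      refine ⟨r + (k:ℝ)*β, ⟨by linarith [hr.1], by linarith [hr.2]⟩, Eq.symm ?_⟩
      show q • (y + (k:ℤ) • ((α:ℝ) : AddCircle (1:ℝ)))
          = ((r + (k:ℝ)*β : ℝ) : AddCircle (1:ℝ))
      calc q • (y + (k:ℤ) • ((α:ℝ) : AddCircle (1:ℝ)))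
          = q • y + q • ((k:ℤ) • ((α:ℝ) : AddCircle (1:ℝ))) := smul_add q _ _
        _ = q • y + (k:ℤ) • (q • ((α:ℝ) : AddCircle (1:ℝ))) := by rw [hcomm]
        _ = ((r:ℝ) : AddCircle (1:ℝ)) + (k:ℤ) • ((β:ℝ) : AddCircle (1:ℝ)) := by
            have hre' : q • y = ((r:ℝ) : AddCircle (1:ℝ)) := hre.symm
            rw [hre', hqα]
        _ = ((r:ℝ) : AddCircle (1:ℝ)) + (((k:ℤ) • β : ℝ) : AddCircle (1:ℝ)) := by
            rw [coe_zsmul]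
        _ = ((r + (k:ℤ) • β : ℝ) : AddCircle (1:ℝ)) := (coe_add _ _).symm
        _ = ((r + (k:ℝ)*β : ℝ) : AddCircle (1:ℝ)) := by
            norm_num [zsmul_eq_mul]
    exact ((hkey i j hi hj hij).preimage _).mono (himg i hi) (himg j hj)
  · -- covering
    intro x
    obtain ⟨s, hs⟩ := QuotientAddGroup.mk_surjective (q • x)
    obtain ⟨t, htdef⟩ : ∃ u : ℝ, u = s - ((⌈s⌉ : ℝ) - 1) := ⟨_, rfl⟩
    have ht0 : 0 < t := by
      have := Int.ceil_lt_add_one s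
      rw [htdef]; linarith
    have ht1 : t ≤ 1 := by
      have := Int.le_ceil s
      rw [htdef]; linarith
    have hts : ((t:ℝ) : AddCircle (1:ℝ)) = q • x := by
      have he : t = s + ((1 - ⌈s⌉ : ℤ) : ℝ) := by rw [htdef]; push_cast; ring
      rw [he, coe_add, hint, add_zero]
      exact hs
    have hcov : ∃ (m : Fin 2) (j : ℕ), j < n ∧
        ((m.val:ℝ)*(β/2) + j*β < t ∧ t < (m.val:ℝ)*(β/2) + j*β + 3*β/4) := by
      obtain ⟨J, hJdef⟩ : ∃ J : ℤ, J = ⌈t/β⌉ - 1 := ⟨_, rfl⟩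
      have hJlt : (J:ℝ) * β < t := by
        have h' : (J:ℝ) < t/β := by
          have := Int.ceil_lt_add_one (t/β)
          rw [hJdef]; push_cast; linarith
        calc (J:ℝ)*β < (t/β)*β := mul_lt_mul_of_pos_right h' hβ0
          _ = t := by field_simp
      have hJge : t ≤ ((J:ℝ)+1) * β := by
        have h' : t/β ≤ ((J:ℝ)+1) := by
          have := Int.le_ceil (t/β)
          rw [hJdef]; push_cast; linarith
        calc t = (t/β)*β := by field_simp
          _ ≤ ((J:ℝ)+1)*β := mul_le_mul_of_nonneg_right h' hβ0.le
      have hJ0 : 0 ≤ J := by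
        have : (0:ℤ) < ⌈t/β⌉ := Int.ceil_pos.mpr (div_pos ht0 hβ0)
        omega
      have hJn : J ≤ (n:ℤ) := by
        by_contra hcon
        push_neg at hcon
        have h' : ((n:ℝ)+1) ≤ (J:ℝ) := by exact_mod_cast hcon
        have : ((n:ℝ)+1)*β ≤ (J:ℝ)*β := mul_le_mul_of_nonneg_right h' hβ0.le
        nlinarith
      have hjJ : ((J.toNat : ℕ) : ℝ) = (J:ℝ) := by exact_mod_cast Int.toNat_of_nonneg hJ0
      by_cases hJln : J < (n:ℤ)
      · have hjn : J.toNat < n := by omega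
        by_cases hc0 : t < (J:ℝ)*β + 3*β/4
        · refine ⟨0, J.toNat, hjn, ?_, ?_⟩
          · simp only [Fin.val_zero, Nat.cast_zero, zero_mul, zero_add]
            rw [hjJ]; exact hJlt
          · simp only [Fin.val_zero, Nat.cast_zero, zero_mul, zero_add]
            rw [hjJ]; exact hc0
        · push_neg at hc0
          refine ⟨1, J.toNat, hjn, ?_, ?_⟩
          · simp only [Fin.val_one, Nat.cast_one, one_mul]
            rw [hjJ]; linarith
          · simp only [Fin.val_one, Nat.cast_one, one_mul]
            rw [hjJ]; linarith
      · have hJeq : J = (n:ℤ) := le_antisymm hJn (not_lt.mp hJln)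
        have hJr : (J:ℝ) = (n:ℝ) := by exact_mod_cast hJeq
        refine ⟨1, n - 1, by omega, ?_, ?_⟩
        · simp only [Fin.val_one, Nat.cast_one, one_mul]
          rw [Nat.cast_sub hn]
          push_cast
          rw [hJr] at hJlt
          nlinarith
        · simp only [Fin.val_one, Nat.cast_one, one_mul]
          rw [Nat.cast_sub hn]
          push_cast
          nlinarith
    obtain ⟨m, j, hjn, hlo', hhi'⟩ := hcov
    refine ⟨m, j, hjn, x - (j:ℤ) • ((α:ℝ) : AddCircle (1:ℝ)), ?_, by simp⟩
    show q • (x - (j:ℤ) • ((α:ℝ) : AddCircle (1:ℝ))) ∈ V m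
    have hcalc : q • (x - (j:ℤ) • ((α:ℝ) : AddCircle (1:ℝ)))
        = ((t - (j:ℝ)*β : ℝ) : AddCircle (1:ℝ)) := by
      calc q • (x - (j:ℤ) • ((α:ℝ) : AddCircle (1:ℝ)))
          = q • x - q • ((j:ℤ) • ((α:ℝ) : AddCircle (1:ℝ))) := smul_sub q _ _
        _ = q • x - (j:ℤ) • (q • ((α:ℝ) : AddCircle (1:ℝ))) := by rw [hcomm]
        _ = ((t:ℝ) : AddCircle (1:ℝ)) - (j:ℤ) • ((β:ℝ) : AddCircle (1:ℝ)) := by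
            rw [hts, hqα]
        _ = ((t:ℝ) : AddCircle (1:ℝ)) - (((j:ℤ) • β : ℝ) : AddCircle (1:ℝ)) := by
            rw [coe_zsmul]
        _ = ((t - (j:ℤ) • β : ℝ) : AddCircle (1:ℝ)) := (coe_sub _ _).symm
        _ = ((t - (j:ℝ)*β : ℝ) : AddCircle (1:ℝ)) := by norm_num [zsmul_eq_mul]
    rw [hcalc]
    exact ⟨t - (j:ℝ)*β, ⟨by linarith, by linarith⟩, rfl⟩
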